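/- Let R_1, R_2, R_3 be complex matrices each with n columns (possibly different numbers of rows). Then the 3×3 matrix M with entries m_jk = ||R_j^* R_k||_tr, the trace norm of R_j^* R_k, is positive semi-definite. -/

import Mathlib

open Matrix ComplexOrder

/-- The trace norm of a rectangular complex matrix: `tr ((Xᴴ X)^{1/2})`,
which equals the sum of the singular values of `X`. -/
noncomputable def traceNorm {m n : ℕ} (X : Matrix (Fin m) (Fin n) ℂ) : ℝ :=
  (((Matrix.posSemidef_conjTranspose_mul_self X).1.eigenvectorUnitary : Matrix (Fin n) (Fin n) ℂ) *
    diagonal (((↑) : ℝ → ℂ) ∘ Real.sqrt ∘ (Matrix.posSemidef_conjTranspose_mul_self X).1.eigenvalues) *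
    (star (Matrix.posSemidef_conjTranspose_mul_self X).1.eigenvectorUnitary :
      Matrix (Fin n) (Fin n) ℂ)).trace.re

section SqrtPort

open scoped MatrixOrder

/-- the matrix square root of a PSD matrix (as in the older Mathlib) -/
noncomputable def Matrix.PosSemidef.sqrt {n : Type*} [Fintype n] [DecidableEq n]
    {A : Matrix n n ℂ} (hA : A.PosSemidef) : Matrix n n ℂ :=
  (hA.1.eigenvectorUnitary : Matrix n n ℂ) *
    diagonal (((↑) : ℝ → ℂ) ∘ Real.sqrt ∘ hA.1.eigenvalues) *
    (star hA.1.eigenvectorUnitary : Matrix n n ℂ)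

lemma Matrix.PosSemidef.sqrt_eq_cfc {n : Type*} [Fintype n] [DecidableEq n]
    {A : Matrix n n ℂ} (hA : A.PosSemidef) : hA.sqrt = CFC.sqrt A := by
  rw [CFC.sqrt_eq_real_sqrt A hA.nonneg, cfcₙ_eq_cfc, hA.1.cfc_eq, IsHermitian.cfc,
    Unitary.conjStarAlgAut_apply]
  rfl

lemma Matrix.PosSemidef.posSemidef_sqrt {n : Type*} [Fintype n] [DecidableEq n]
    {A : Matrix n n ℂ} (hA : A.PosSemidef) : hA.sqrt.PosSemidef := by
  rw [hA.sqrt_eq_cfc]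
  exact (CFC.sqrt_nonneg A).posSemidef

lemma Matrix.PosSemidef.sqrt_mul_self {n : Type*} [Fintype n] [DecidableEq n]
    {A : Matrix n n ℂ} (hA : A.PosSemidef) : hA.sqrt * hA.sqrt = A := by
  rw [hA.sqrt_eq_cfc]
  exact CFC.sqrt_mul_sqrt_self A hA.nonneg

lemma Matrix.PosSemidef.eq_sqrt_of_sq_eq {n : Type*} [Fintype n] [DecidableEq n]
    {A B : Matrix n n ℂ} (hB : B.PosSemidef) (hA : A.PosSemidef) (h : B ^ 2 = A) :
    B = hA.sqrt := by
  rw [hA.sqrt_eq_cfc]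
  exact (CFC.sqrt_unique (by rw [← sq]; exact h) hB.nonneg).symm

end SqrtPort


noncomputable section DruryAux

/-- generalized trace norm -/
noncomputable def tnAux {p q : Type*} [Fintype p] [Fintype q] [DecidableEq q]
    (X : Matrix p q ℂ) : ℝ :=
  ((Matrix.posSemidef_conjTranspose_mul_self X).sqrt.trace).re

lemma sqrt_congr {n : Type*} [Fintype n] [DecidableEq n] {A B : Matrix n n ℂ}
    (hA : A.PosSemidef) (hB : B.PosSemidef) (h : A = B) : hA.sqrt = hB.sqrt := by
  subst h; rfl

lemma tnAux_congr {p p' q : Type*} [Fintype p] [Fintype p'] [Fintype q] [DecidableEq q]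
    {X : Matrix p q ℂ} {Y : Matrix p' q ℂ} (h : Xᴴ * X = Yᴴ * Y) : tnAux X = tnAux Y := by
  unfold tnAux
  rw [sqrt_congr (Matrix.posSemidef_conjTranspose_mul_self X)
    (Matrix.posSemidef_conjTranspose_mul_self Y) h]

lemma psd_diag_nonneg {n : Type*} [Fintype n] [DecidableEq n] {M : Matrix n n ℂ}
    (hM : M.PosSemidef) (i : n) : 0 ≤ (M i i).re ∧ (M i i).im = 0 := by
  have h : 0 ≤ M i i := hM.diag_nonneg
  rw [Complex.le_def] at h
  simpa using ⟨h.1, h.2.symm⟩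

lemma psd_trace_re_nonneg {n : Type*} [Fintype n] [DecidableEq n] {M : Matrix n n ℂ}
    (hM : M.PosSemidef) : 0 ≤ (M.trace).re := by
  rw [Matrix.trace, Complex.re_sum]
  exact Finset.sum_nonneg fun i _ => (psd_diag_nonneg hM i).1

lemma psd_trace_real {n : Type*} [Fintype n] [DecidableEq n] {M : Matrix n n ℂ}
    (hM : M.PosSemidef) : M.trace = ((M.trace).re : ℂ) := by
  apply Complex.ext
  · simp
  · simp [Matrix.trace, Complex.im_sum]
    exact Finset.sum_eq_zero fun i _ => (psd_diag_nonneg hM i).2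

lemma tnAux_nonneg {p q : Type*} [Fintype p] [Fintype q] [DecidableEq q]
    (X : Matrix p q ℂ) : 0 ≤ tnAux X :=
  psd_trace_re_nonneg (Matrix.posSemidef_conjTranspose_mul_self X).posSemidef_sqrt

end DruryAux
section Polar

variable {n : Type*} [Fintype n] [DecidableEq n]

lemma trace_sqrt_eq_sum {S : Matrix n n ℂ} (hS : S.PosSemidef) :
    hS.sqrt.trace = ∑ i, ((Real.sqrt (hS.1.eigenvalues i)) : ℂ) := by
  rw [Matrix.PosSemidef.sqrt, Matrix.trace_mul_cycle]
  rw [show (star hS.1.eigenvectorUnitary : Matrix n n ℂ) * hS.1.eigenvectorUnitary.1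
      = 1 from (Unitary.mem_iff.mp hS.1.eigenvectorUnitary.2).1]
  rw [one_mul, Matrix.trace_diagonal]
  rfl

lemma onb_matrix_unitary (d : OrthonormalBasis n ℂ (EuclideanSpace ℂ n)) :
    (Matrix.of fun i j => d j i : Matrix n n ℂ)ᴴ * (Matrix.of fun i j => d j i) = 1 := by
  ext i j
  have h := orthonormal_iff_ite.mp d.orthonormal i j
  rw [PiLp.inner_apply] at h
  simp only [RCLike.inner_apply, starRingEnd_apply] at h
  simp only [Matrix.mul_apply, Matrix.conjTranspose_apply, Matrix.of_apply, Matrix.one_apply,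
    dotProduct]
  rw [← h]
  exact Finset.sum_congr rfl fun _ _ => mul_comm _ _

set_option maxHeartbeats 1000000 in
lemma polar_exists (A : Matrix n n ℂ) :
    ∃ U : Matrix n n ℂ, Uᴴ * U = 1 ∧ (A * U).PosSemidef ∧ (A * U) ^ 2 = A * Aᴴ ∧
      (A * U).trace = (Matrix.posSemidef_conjTranspose_mul_self A).sqrt.trace := by
  have hH := Matrix.posSemidef_conjTranspose_mul_self A
  set μ : n → ℝ := hH.1.eigenvalues with hμdef
  have hμ0 : ∀ i, 0 ≤ μ i := fun i => hH.eigenvalues_nonneg i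
  set b := hH.1.eigenvectorBasis with hbdef
  set bf : n → (n → ℂ) := fun j => (WithLp.equiv 2 (n → ℂ)) (b j) with hbf
  have hbd : ∀ i j, bf i j = b i j := fun i j => rfl
  set w : n → EuclideanSpace ℂ n :=
    fun j => (WithLp.equiv 2 (n → ℂ)).symm (A *ᵥ bf j) with hwdef
  have horth : ∀ i j, star (bf i) ⬝ᵥ bf j = if i = j then (1:ℂ) else 0 := by
    intro i j
    have h := orthonormal_iff_ite.mp b.orthonormal i j
    rw [PiLp.inner_apply] at h
    simp only [RCLike.inner_apply, starRingEnd_apply] at h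
    simp only [dotProduct]
    rw [← h]
    exact Finset.sum_congr rfl fun _ _ => mul_comm _ _
  have hinner : ∀ i j, (inner ℂ (w i) (w j) : ℂ) = if i = j then (μ j : ℂ) else 0 := by
    intro i j
    rw [EuclideanSpace.inner_eq_star_dotProduct, dotProduct_comm _ (star _)]
    simp only [hwdef, Equiv.apply_symm_apply, WithLp.equiv_symm_apply, WithLp.ofLp_toLp]
    rw [Matrix.star_mulVec, ← dotProduct_mulVec, Matrix.mulVec_mulVec]
    have key : (Aᴴ * A) *ᵥ (bf j) = μ j • bf j :=
      Matrix.IsHermitian.mulVec_eigenvectorBasis hH.1 j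
    rw [key]
    have hsm : star (bf i) ⬝ᵥ (μ j • bf j) = (μ j : ℂ) * (star (bf i) ⬝ᵥ bf j) := by
      simp only [dotProduct, Pi.smul_apply, Complex.real_smul, Finset.mul_sum]
      exact Finset.sum_congr rfl (fun k _ => by ring)
    rw [hsm, horth]
    by_cases hij : i = j <;> simp [hij]
  have hw0 : ∀ j, μ j = 0 → A *ᵥ bf j = 0 := by
    intro j hj
    have h := hinner j j
    simp only [if_pos rfl, hj, Complex.ofReal_zero] at h
    have hz : w j = 0 := inner_self_eq_zero.mp h
    have h4 := congrArg (WithLp.equiv 2 (n → ℂ)) hz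
    simpa [hwdef] using h4
  classical
  set s : Set n := {i | μ i ≠ 0} with hsdef
  set v : n → EuclideanSpace ℂ n := fun i => (((Real.sqrt (μ i)) : ℂ))⁻¹ • w i with hvdef
  have hv : Orthonormal ℂ (s.domRestrict v) := by
    rw [orthonormal_iff_ite]
    intro i j
    simp only [Set.domRestrict_apply, hvdef, inner_smul_left, inner_smul_right, hinner]
    rcases eq_or_ne (i : n) (j : n) with hij | hij
    · have hij' : i = j := Subtype.ext hij
      subst hij'
      simp only [if_pos rfl, if_true]
      have hμi : μ (i : n) ≠ 0 := i.2
      have hs : Real.sqrt (μ i) ≠ 0 := by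
        intro h0
        exact hμi (by simpa [Real.sqrt_eq_zero', hμ0 (i:n)] using h0)
      rw [map_inv₀, Complex.conj_ofReal]
      rw [show ((μ (i:n)) : ℂ) = ((Real.sqrt (μ (i:n))) : ℂ) * ((Real.sqrt (μ (i:n))) : ℂ) by
        rw [← Complex.ofReal_mul, Real.mul_self_sqrt (hμ0 i)]]
      have hsC : (((Real.sqrt (μ (i:n)))) : ℂ) ≠ 0 := by simpa using hs
      field_simp
    · have hne : (i = j) = False := by
        simp only [eq_iff_iff, iff_false]
        exact fun h => hij (congrArg Subtype.val h)
      simp [hij, hne]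
  obtain ⟨c, hc⟩ := hv.exists_orthonormalBasis_extension_of_card_eq finrank_euclideanSpace
  set Cm : Matrix n n ℂ := Matrix.of (fun i j => c j i) with hCm
  set Bm : Matrix n n ℂ := Matrix.of (fun i j => b j i) with hBm
  have hCu : Cmᴴ * Cm = 1 := onb_matrix_unitary c
  have hBu : Bmᴴ * Bm = 1 := onb_matrix_unitary b
  have hCu' : Cm * Cmᴴ = 1 := mul_eq_one_comm.mp hCu
  have hBu' : Bm * Bmᴴ = 1 := mul_eq_one_comm.mp hBu
  set D : Matrix n n ℂ := Matrix.diagonal (fun i => ((Real.sqrt (μ i)) : ℂ)) with hD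
  have hDh : Dᴴ = D := by
    rw [hD, Matrix.diagonal_conjTranspose]
    congr 1
    funext i
    simp [Pi.star_def, Complex.conj_ofReal]
  have hAB : A * Bm = Cm * D := by
    ext i j
    rw [hD, Matrix.mul_diagonal, Matrix.mul_apply]
    have hL : ∑ k, A i k * Bm k j = (A *ᵥ bf j) i := by
      simp [Matrix.mulVec, dotProduct, hBm, hbd]
    rw [hL]
    by_cases hj : μ j = 0
    · simp [hw0 j hj, hj]
    · have hcj : c j = v j := hc j hj
      have hs : Real.sqrt (μ j) ≠ 0 := by
        intro h0
        exact hj (by simpa [Real.sqrt_eq_zero', hμ0 j] using h0)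
      have hCmij : Cm i j = (((Real.sqrt (μ j)) : ℂ))⁻¹ * (A *ᵥ bf j) i := by
        show c j i = _
        rw [hcj, hvdef]
        show ((((Real.sqrt (μ j)) : ℂ))⁻¹ • w j) i = _
        rw [PiLp.smul_apply]
        rfl
      rw [hCmij]
      have hsC : (((Real.sqrt (μ j)) : ℂ)) ≠ 0 := by simpa using hs
      field_simp
  have hA' : A = Cm * D * Bmᴴ := by
    calc A = A * (Bm * Bmᴴ) := by rw [hBu', mul_one]
    _ = (A * Bm) * Bmᴴ := by rw [mul_assoc]
    _ = Cm * D * Bmᴴ := by rw [hAB]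
  have hAU : A * (Bm * Cmᴴ) = Cm * D * Cmᴴ := by
    calc A * (Bm * Cmᴴ) = (A * Bm) * Cmᴴ := by rw [mul_assoc]
    _ = Cm * D * Cmᴴ := by rw [hAB]
  refine ⟨Bm * Cmᴴ, ?_, ?_, ?_, ?_⟩
  · have h1 : (Bm * Cmᴴ)ᴴ * (Bm * Cmᴴ) = Cm * (Bmᴴ * Bm) * Cmᴴ := by
      simp only [Matrix.conjTranspose_mul, Matrix.conjTranspose_conjTranspose]
      noncomm_ring
    rw [h1, hBu, mul_one, hCu']
  · rw [hAU]
    exact (Matrix.PosSemidef.diagonal (fun i => Complex.zero_le_real.mpr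
      (Real.sqrt_nonneg _))).mul_mul_conjTranspose_same Cm
  · rw [hAU]
    have hAAH : A * Aᴴ = Cm * D * (D * Cmᴴ) := by
      calc A * Aᴴ = (Cm * D) * (Bmᴴ * Bm) * (Dᴴ * Cmᴴ) := by
            rw [hA']
            simp only [Matrix.conjTranspose_mul, Matrix.conjTranspose_conjTranspose]
            noncomm_ring
      _ = Cm * D * (D * Cmᴴ) := by rw [hBu, hDh, mul_one]
    rw [hAAH, pow_two]
    calc Cm * D * Cmᴴ * (Cm * D * Cmᴴ) = Cm * D * (Cmᴴ * Cm) * (D * Cmᴴ) := by noncomm_ring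
    _ = Cm * D * (D * Cmᴴ) := by rw [hCu, mul_one]
  · rw [hAU, Matrix.trace_mul_cycle, hCu, one_mul, hD, Matrix.trace_diagonal,
      trace_sqrt_eq_sum hH]

end Polar
section Bounds

variable {n : Type*} [Fintype n] [DecidableEq n]

/-- For `P` PSD and `V` unitary, `Re tr (P V) ≤ Re tr P`. -/
lemma re_trace_psd_mul_le {P V : Matrix n n ℂ} (hP : P.PosSemidef) (hV : Vᴴ * V = 1) :
    ((P * V).trace).re ≤ (P.trace).re := by
  set S := hP.sqrt with hSdef
  have hS : S.PosSemidef := hP.posSemidef_sqrt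
  have hSS : S * S = P := hP.sqrt_mul_self
  have hcyc : (P * V).trace = (S * V * S).trace := by
    rw [← hSS, Matrix.trace_mul_cycle, Matrix.trace_mul_cycle]
  rw [hcyc]
  rw [Matrix.trace, Complex.re_sum, ← hSS, Matrix.trace, Complex.re_sum]
  apply Finset.sum_le_sum
  intro i _
  -- vectors
  set x : EuclideanSpace ℂ n := (WithLp.equiv 2 (n → ℂ)).symm (fun j => S j i) with hx
  set y : EuclideanSpace ℂ n := (WithLp.equiv 2 (n → ℂ)).symm (V *ᵥ (fun j => S j i)) with hy
  have hxy : ((S * V * S).diag i) = inner ℂ x y := by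
    rw [EuclideanSpace.inner_eq_star_dotProduct, dotProduct_comm _ (star _)]
    simp only [hx, hy, Equiv.apply_symm_apply, WithLp.equiv_symm_apply, WithLp.ofLp_toLp]
    simp only [Matrix.diag, Matrix.mul_apply, Matrix.mulVec, dotProduct, Pi.star_apply,
      Finset.mul_sum, Finset.sum_mul]
    rw [Finset.sum_comm]
    apply Finset.sum_congr rfl
    intro k _
    apply Finset.sum_congr rfl
    intro l _
    have hconj : star (S k i) = S i k := by
      rw [← Matrix.conjTranspose_apply, hS.1.eq]
    rw [hconj]
    ring
  have hxx : ((S * S).diag i) = inner ℂ x x := by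
    rw [EuclideanSpace.inner_eq_star_dotProduct, dotProduct_comm _ (star _)]
    simp only [hx, Equiv.apply_symm_apply, WithLp.equiv_symm_apply, WithLp.ofLp_toLp]
    simp only [Matrix.diag, Matrix.mul_apply, dotProduct, Pi.star_apply]
    apply Finset.sum_congr rfl
    intro k _
    have hconj : star (S k i) = S i k := by
      rw [← Matrix.conjTranspose_apply, hS.1.eq]
    rw [hconj]
  have hyx : ‖y‖ = ‖x‖ := by
    have h1 : (inner ℂ y y : ℂ) = inner ℂ x x := by
      rw [EuclideanSpace.inner_eq_star_dotProduct, EuclideanSpace.inner_eq_star_dotProduct,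
        dotProduct_comm _ (star _), dotProduct_comm _ (star _)]
      simp only [hx, hy, Equiv.apply_symm_apply, WithLp.equiv_symm_apply, WithLp.ofLp_toLp]
      rw [Matrix.star_mulVec, ← dotProduct_mulVec, Matrix.mulVec_mulVec, hV,
        Matrix.one_mulVec]
    have h2 : ‖y‖ ^ 2 = ‖x‖ ^ 2 := by
      rw [← inner_self_eq_norm_sq (𝕜 := ℂ), ← inner_self_eq_norm_sq (𝕜 := ℂ), h1]
    rw [← Real.sqrt_sq (norm_nonneg y), h2, Real.sqrt_sq (norm_nonneg x)]
  calc ((S * V * S).diag i).re = (inner ℂ x y : ℂ).re := by rw [hxy]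
  _ ≤ ‖(inner ℂ x y : ℂ)‖ := Complex.re_le_norm _
  _ ≤ ‖x‖ * ‖y‖ := norm_inner_le_norm x y
  _ = ‖x‖ * ‖x‖ := by rw [hyx]
  _ = ((S * S).diag i).re := by
      rw [hxx]
      rw [← inner_self_eq_norm_mul_norm (𝕜 := ℂ)]
      rfl

/-- existence of an optimal unitary: `tr (A U) = tnAux A` -/
lemma exists_opt (A : Matrix n n ℂ) :
    ∃ U : Matrix n n ℂ, Uᴴ * U = 1 ∧ (A * U).trace = ((tnAux A : ℝ) : ℂ) := by
  obtain ⟨U, hU, hPSD, -, htr⟩ := polar_exists A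
  refine ⟨U, hU, ?_⟩
  rw [psd_trace_real hPSD]
  unfold tnAux
  rw [← htr]

/-- the upper bound: `Re tr (A V) ≤ tnAux A` for all unitary `V`. -/
lemma re_trace_le_tnAux (A : Matrix n n ℂ) {V : Matrix n n ℂ} (hV : Vᴴ * V = 1) :
    ((A * V).trace).re ≤ tnAux A := by
  obtain ⟨U, hU, hPSD, -, htr⟩ := polar_exists A
  have hU' : U * Uᴴ = 1 := mul_eq_one_comm.mp hU
  have hAV : A * V = (A * U) * (Uᴴ * V) := by
    calc A * V = A * (U * Uᴴ) * V := by rw [hU', mul_one]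
    _ = (A * U) * (Uᴴ * V) := by noncomm_ring
  have hW : (Uᴴ * V)ᴴ * (Uᴴ * V) = 1 := by
    calc (Uᴴ * V)ᴴ * (Uᴴ * V) = Vᴴ * (U * Uᴴ) * V := by
          simp only [Matrix.conjTranspose_mul, Matrix.conjTranspose_conjTranspose]
          noncomm_ring
    _ = 1 := by rw [hU', mul_one, hV]
  rw [hAV]
  calc ((A * U * (Uᴴ * V)).trace).re ≤ ((A * U).trace).re := re_trace_psd_mul_le hPSD hW
  _ = tnAux A := by rw [htr]; unfold tnAux; rfl

lemma abs_trace_le_tnAux (A : Matrix n n ℂ) {V : Matrix n n ℂ} (hV : Vᴴ * V = 1) :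
    ‖(A * V).trace‖ ≤ tnAux A := by
  set z := (A * V).trace with hz
  rcases eq_or_ne z 0 with h0 | h0
  · rw [h0]
    simpa using tnAux_nonneg A
  · set c : ℂ := (starRingEnd ℂ) z / (‖z‖ : ℂ) with hc
    have hcabs : ‖c‖ = 1 := by
      rw [hc]
      rw [norm_div, Complex.norm_conj, Complex.norm_real, norm_norm,
        div_self (norm_ne_zero_iff.mpr h0)]
    have hunit : (c • V)ᴴ * (c • V) = 1 := by
      rw [Matrix.conjTranspose_smul, Matrix.smul_mul, Matrix.mul_smul, hV, smul_smul]
      have hcc : star c * c = 1 := by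
        rw [Complex.star_def, mul_comm, Complex.mul_conj, Complex.normSq_eq_norm_sq]
        norm_cast
        rw [hcabs, one_pow]
      rw [hcc, one_smul]
    have hval : c * z = ((‖z‖ : ℝ) : ℂ) := by
      rw [hc, div_mul_eq_mul_div, mul_comm, Complex.mul_conj, Complex.normSq_eq_norm_sq]
      have habs : (‖z‖ : ℂ) ≠ 0 := by
        simpa using h0
      push_cast
      field_simp
    have htr2 : (A * (c • V)).trace = c * z := by
      rw [Matrix.mul_smul, Matrix.trace_smul, hz, smul_eq_mul]
    have := re_trace_le_tnAux A hunit
    rw [htr2, hval] at this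
    simpa using this

end Bounds
section Flip

variable {p q : Type*} [Fintype p] [DecidableEq p] [Fintype q] [DecidableEq q]

open scoped MatrixOrder in
lemma psd_fromBlocks_diag {A : Matrix p p ℂ} {B : Matrix q q ℂ}
    (hA : A.PosSemidef) (hB : B.PosSemidef) :
    (Matrix.fromBlocks A 0 0 B).PosSemidef := by
  obtain ⟨A', hA'⟩ := CStarAlgebra.nonneg_iff_eq_star_mul_self.mp hA.nonneg
  obtain ⟨B', hB'⟩ := CStarAlgebra.nonneg_iff_eq_star_mul_self.mp hB.nonneg
  rw [Matrix.star_eq_conjTranspose] at hA' hB'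
  have : Matrix.fromBlocks A 0 0 B =
      (Matrix.fromBlocks A' 0 0 B')ᴴ * (Matrix.fromBlocks A' 0 0 B') := by
    rw [Matrix.fromBlocks_conjTranspose]
    simp [Matrix.fromBlocks_multiply, hA', hB']
  rw [this]
  exact Matrix.posSemidef_conjTranspose_mul_self _

lemma trace_fromBlocks' (A : Matrix p p ℂ) (B : Matrix p q ℂ) (C : Matrix q p ℂ)
    (D : Matrix q q ℂ) :
    (Matrix.fromBlocks A B C D).trace = A.trace + D.trace := by
  simp [Matrix.trace, Fintype.sum_sum_type, Matrix.diag]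

lemma sqrt_fromBlocks₂₂ {S : Matrix q q ℂ} (hS : S.PosSemidef)
    (h : (Matrix.fromBlocks (0 : Matrix p p ℂ) 0 0 S).PosSemidef) :
    h.sqrt = Matrix.fromBlocks 0 0 0 hS.sqrt := by
  symm
  apply Matrix.PosSemidef.eq_sqrt_of_sq_eq (psd_fromBlocks_diag Matrix.PosSemidef.zero
    hS.posSemidef_sqrt) h
  rw [pow_two]
  simp [Matrix.fromBlocks_multiply, hS.sqrt_mul_self]

lemma sqrt_fromBlocks₁₁ {S : Matrix p p ℂ} (hS : S.PosSemidef)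
    (h : (Matrix.fromBlocks S 0 0 (0 : Matrix q q ℂ)).PosSemidef) :
    h.sqrt = Matrix.fromBlocks hS.sqrt 0 0 0 := by
  symm
  apply Matrix.PosSemidef.eq_sqrt_of_sq_eq (psd_fromBlocks_diag hS.posSemidef_sqrt
    Matrix.PosSemidef.zero) h
  rw [pow_two]
  simp [Matrix.fromBlocks_multiply, hS.sqrt_mul_self]

lemma tnAux_flip (X : Matrix p q ℂ) : tnAux X = tnAux Xᴴ := by
  set Y : Matrix (p ⊕ q) (p ⊕ q) ℂ := Matrix.fromBlocks 0 X 0 0 with hY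
  have hY1 : Yᴴ * Y = Matrix.fromBlocks 0 0 0 (Xᴴ * X) := by
    rw [hY, Matrix.fromBlocks_conjTranspose]
    simp [Matrix.fromBlocks_multiply]
  have hY2 : Y * Yᴴ = Matrix.fromBlocks (X * Xᴴ) 0 0 0 := by
    rw [hY, Matrix.fromBlocks_conjTranspose]
    simp [Matrix.fromBlocks_multiply]
  obtain ⟨U, hU, hPSD, hsq, htr⟩ := polar_exists Y
  have hYYH := Matrix.posSemidef_self_mul_conjTranspose Y
  have he : Y * U = hYYH.sqrt := hPSD.eq_sqrt_of_sq_eq hYYH hsq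
  have hflip : (Matrix.posSemidef_conjTranspose_mul_self Y).sqrt.trace = hYYH.sqrt.trace := by
    rw [← htr, he]
  -- left side
  have hfb : (Matrix.fromBlocks (0 : Matrix p p ℂ) 0 0 (Xᴴ * X)).PosSemidef :=
    psd_fromBlocks_diag Matrix.PosSemidef.zero (Matrix.posSemidef_conjTranspose_mul_self X)
  have hL : (Matrix.posSemidef_conjTranspose_mul_self Y).sqrt.trace =
      (Matrix.posSemidef_conjTranspose_mul_self X).sqrt.trace := by
    rw [sqrt_congr (Matrix.posSemidef_conjTranspose_mul_self Y) hfb hY1,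
      sqrt_fromBlocks₂₂ (Matrix.posSemidef_conjTranspose_mul_self X) hfb,
      trace_fromBlocks', Matrix.trace_zero, zero_add]
  -- right side
  have hXXH : (X * Xᴴ).PosSemidef := Matrix.posSemidef_self_mul_conjTranspose X
  have hfb2 : (Matrix.fromBlocks (X * Xᴴ) 0 0 (0 : Matrix q q ℂ)).PosSemidef :=
    psd_fromBlocks_diag hXXH Matrix.PosSemidef.zero
  have hR : hYYH.sqrt.trace = (Matrix.posSemidef_conjTranspose_mul_self Xᴴ).sqrt.trace := by
    rw [sqrt_congr hYYH hfb2 hY2, sqrt_fromBlocks₁₁ hXXH hfb2,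
      trace_fromBlocks', Matrix.trace_zero, add_zero]
    rw [sqrt_congr (Matrix.posSemidef_conjTranspose_mul_self Xᴴ) hXXH
      (by rw [Matrix.conjTranspose_conjTranspose])]
  unfold tnAux
  rw [hL.symm.trans (hflip.trans hR)]

end Flip
section Emb

variable {n : Type*} [Fintype n] [DecidableEq n]

noncomputable def embM (M : Matrix n n ℂ) : EuclideanSpace ℂ (n × n) :=
  (WithLp.equiv 2 (n × n → ℂ)).symm (fun ij => M ij.1 ij.2)

lemma inner_embM (M N : Matrix n n ℂ) : (inner ℂ (embM M) (embM N) : ℂ) = (Mᴴ * N).trace := by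
  rw [EuclideanSpace.inner_eq_star_dotProduct, dotProduct_comm _ (star _)]
  simp only [embM, Equiv.apply_symm_apply, WithLp.equiv_symm_apply, WithLp.ofLp_toLp]
  rw [Matrix.trace]
  simp only [Matrix.diag, Matrix.mul_apply, Matrix.conjTranspose_apply, dotProduct,
    Pi.star_apply]
  rw [Fintype.sum_prod_type]
  rw [Finset.sum_comm]

lemma norm_embM (M : Matrix n n ℂ) : ‖embM M‖ = Real.sqrt (((Mᴴ * M).trace).re) := by
  rw [@norm_eq_sqrt_re_inner ℂ, inner_embM]
  rfl

lemma embM_eq_zero {M : Matrix n n ℂ} (h : ((Mᴴ * M).trace).re = 0) : M = 0 := by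
  have h1 : ‖embM M‖ = 0 := by rw [norm_embM, h, Real.sqrt_zero]
  have h2 : embM M = 0 := norm_eq_zero.mp h1
  ext i j
  have := congrArg (fun z => (WithLp.equiv 2 (n × n → ℂ)) z (i, j)) h2
  simpa [embM] using this

lemma key_inner {E : Type*} [NormedAddCommGroup E] [InnerProductSpace ℂ E]
    (u v w : E) (hu : ‖u‖ = 1) (hv : ‖v‖ = 1) (hw : ‖w‖ = 1) {a b : ℝ}
    (hab : (inner ℂ u v : ℂ) = (a : ℂ)) (hbc : (inner ℂ v w : ℂ) = (b : ℂ)) :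
    a * b - Real.sqrt ((1 - a ^ 2) * (1 - b ^ 2)) ≤ (inner ℂ u w : ℂ).re := by
  set u' := u - (a : ℂ) • v with hu'def
  set w' := w - (b : ℂ) • v with hw'def
  have hvv : (inner ℂ v v : ℂ) = 1 := by
    rw [inner_self_eq_norm_sq_to_K, hv]; norm_num
  have huu : (inner ℂ u u : ℂ) = 1 := by
    rw [inner_self_eq_norm_sq_to_K, hu]; norm_num
  have hww : (inner ℂ w w : ℂ) = 1 := by
    rw [inner_self_eq_norm_sq_to_K, hw]; norm_num
  have hvu : (inner ℂ v u : ℂ) = (a : ℂ) := by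
    rw [← inner_conj_symm, hab, Complex.conj_ofReal]
  have hwv : (inner ℂ w v : ℂ) = (b : ℂ) := by
    rw [← inner_conj_symm, hbc, Complex.conj_ofReal]
  have hvw : (inner ℂ v w : ℂ) = (b : ℂ) := hbc
  have huw' : (inner ℂ u' w' : ℂ) = (inner ℂ u w : ℂ) - ((a * b : ℝ) : ℂ) := by
    simp only [hu'def, hw'def, inner_sub_left, inner_sub_right, inner_smul_left,
      inner_smul_right, hab, hbc, hvv, hvu, hvw, Complex.conj_ofReal]
    push_cast
    ring
  have hu'sq : ‖u'‖ ^ 2 = 1 - a ^ 2 := by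
    rw [← inner_self_eq_norm_sq (𝕜 := ℂ)]
    have : (inner ℂ u' u' : ℂ) = ((1 - a ^ 2 : ℝ) : ℂ) := by
      simp only [hu'def, inner_sub_left, inner_sub_right, inner_smul_left, inner_smul_right,
        hab, hvu, hvv, huu, Complex.conj_ofReal]
      push_cast
      ring
    rw [this]
    simp [← Complex.ofReal_pow]
  have hw'sq : ‖w'‖ ^ 2 = 1 - b ^ 2 := by
    rw [← inner_self_eq_norm_sq (𝕜 := ℂ)]
    have : (inner ℂ w' w' : ℂ) = ((1 - b ^ 2 : ℝ) : ℂ) := by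
      simp only [hw'def, inner_sub_left, inner_sub_right, inner_smul_left, inner_smul_right,
        hbc, hwv, hvv, hww, Complex.conj_ofReal]
      push_cast
      ring
    rw [this]
    simp [← Complex.ofReal_pow]
  have hnorm_u' : ‖u'‖ = Real.sqrt (1 - a ^ 2) := by
    rw [← Real.sqrt_sq (norm_nonneg u'), hu'sq]
  have hnorm_w' : ‖w'‖ = Real.sqrt (1 - b ^ 2) := by
    rw [← Real.sqrt_sq (norm_nonneg w'), hw'sq]
  have hbound : -(‖u'‖ * ‖w'‖) ≤ (inner ℂ u' w' : ℂ).re := by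
    have h1 : ‖(inner ℂ u' w' : ℂ)‖ ≤ ‖u'‖ * ‖w'‖ := norm_inner_le_norm u' w'
    have h2 : |(inner ℂ u' w' : ℂ).re| ≤ ‖(inner ℂ u' w' : ℂ)‖ := Complex.abs_re_le_norm _
    have := (abs_le.mp (h2.trans h1)).1
    linarith
  have hre : (inner ℂ u w : ℂ).re = a * b + (inner ℂ u' w' : ℂ).re := by
    have := congrArg Complex.re huw'
    simp at this
    linarith
  have ha2 : (0:ℝ) ≤ 1 - a ^ 2 := hu'sq ▸ sq_nonneg ‖u'‖
  rw [hre]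
  rw [hnorm_u', hnorm_w'] at hbound
  rw [← Real.sqrt_mul ha2] at hbound
  linarith

end Emb
section TN

variable {n : Type*} [Fintype n] [DecidableEq n]

lemma tn_self_psd {P : Matrix n n ℂ} (hP : P.PosSemidef) :
    tnAux (P * P) = ((P * P).trace).re := by
  have hPP : (P * P).PosSemidef := by
    have := Matrix.posSemidef_conjTranspose_mul_self P
    rwa [hP.1.eq] at this
  have he : (P * P) = (Matrix.posSemidef_conjTranspose_mul_self (P * P)).sqrt := by
    apply hPP.eq_sqrt_of_sq_eq
    rw [Matrix.conjTranspose_mul, hP.1.eq, pow_two]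
  unfold tnAux
  rw [← he]

lemma norm_embM_psd {P : Matrix n n ℂ} (hP : P.PosSemidef) :
    ‖embM P‖ = Real.sqrt (((P * P).trace).re) := by
  rw [norm_embM, hP.1.eq]

lemma norm_embM_mul_unitary {Q U : Matrix n n ℂ} (hQ : Q.PosSemidef) (hU : Uᴴ * U = 1) :
    ‖embM (Q * U)‖ = Real.sqrt (((Q * Q).trace).re) := by
  rw [norm_embM]
  congr 2
  have hU' := mul_eq_one_comm.mp hU
  have e1 : (Q * U)ᴴ * (Q * U) = (Uᴴ * Q) * (Q * U) := by
    rw [Matrix.conjTranspose_mul, hQ.1.eq]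
  rw [e1, Matrix.trace_mul_comm]
  have e2 : (Q * U) * (Uᴴ * Q) = Q * (U * Uᴴ) * Q := by noncomm_ring
  rw [e2, hU', mul_one]

lemma tn_unitary_absorb {Q R U : Matrix n n ℂ} (hU : Uᴴ * U = 1) :
    tnAux (Uᴴ * (Q * R)) = tnAux (Q * R) := by
  apply tnAux_congr
  have hU' := mul_eq_one_comm.mp hU
  have e1 : (Uᴴ * (Q * R))ᴴ * (Uᴴ * (Q * R)) = (Q * R)ᴴ * (U * Uᴴ) * (Q * R) := by
    simp only [Matrix.conjTranspose_mul, Matrix.conjTranspose_conjTranspose]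
    noncomm_ring
  rw [e1, hU', mul_one]

lemma tn_cs {P Q : Matrix n n ℂ} (hP : P.PosSemidef) (hQ : Q.PosSemidef) :
    tnAux (P * Q) ≤ Real.sqrt (((P * P).trace).re) * Real.sqrt (((Q * Q).trace).re) := by
  obtain ⟨U, hU, hUtr⟩ := exists_opt (P * Q)
  have h1 : (inner ℂ (embM P) (embM (Q * U)) : ℂ) = ((tnAux (P * Q) : ℝ) : ℂ) := by
    rw [inner_embM, hP.1.eq, ← Matrix.mul_assoc, hUtr]
  have h2 : tnAux (P * Q) ≤ ‖(inner ℂ (embM P) (embM (Q * U)) : ℂ)‖ := by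
    rw [h1]
    simpa using le_abs_self _
  calc tnAux (P * Q) ≤ ‖(inner ℂ (embM P) (embM (Q * U)) : ℂ)‖ := h2
  _ ≤ ‖embM P‖ * ‖embM (Q * U)‖ := norm_inner_le_norm _ _
  _ = Real.sqrt (((P * P).trace).re) * Real.sqrt (((Q * Q).trace).re) := by
      rw [norm_embM_psd hP, norm_embM_mul_unitary hQ hU]

lemma tri {P Q R : Matrix n n ℂ} (hP : P.PosSemidef) (hQ : Q.PosSemidef) (hR : R.PosSemidef)
    (ha : 0 < ((P * P).trace).re) (hb : 0 < ((Q * Q).trace).re)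
    (hc : 0 < ((R * R).trace).re) :
    (tnAux (P * Q) / (Real.sqrt (((P * P).trace).re) * Real.sqrt (((Q * Q).trace).re))) *
      (tnAux (Q * R) / (Real.sqrt (((Q * Q).trace).re) * Real.sqrt (((R * R).trace).re))) -
    Real.sqrt ((1 - (tnAux (P * Q) /
        (Real.sqrt (((P * P).trace).re) * Real.sqrt (((Q * Q).trace).re))) ^ 2) *
      (1 - (tnAux (Q * R) /
        (Real.sqrt (((Q * Q).trace).re) * Real.sqrt (((R * R).trace).re))) ^ 2)) ≤
    tnAux (P * R) / (Real.sqrt (((P * P).trace).re) * Real.sqrt (((R * R).trace).re)) := by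
  set na := Real.sqrt (((P * P).trace).re) with hna
  set nb := Real.sqrt (((Q * Q).trace).re) with hnb
  set nc := Real.sqrt (((R * R).trace).re) with hnc
  have hna0 : 0 < na := Real.sqrt_pos.mpr ha
  have hnb0 : 0 < nb := Real.sqrt_pos.mpr hb
  have hnc0 : 0 < nc := Real.sqrt_pos.mpr hc
  obtain ⟨U, hU, hUtr⟩ := exists_opt (P * Q)
  obtain ⟨V, hV, hVtr⟩ := exists_opt (Uᴴ * (Q * R))
  have hU' := mul_eq_one_comm.mp hU
  set u : EuclideanSpace ℂ (n × n) := ((na : ℂ))⁻¹ • embM P with hu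
  set v : EuclideanSpace ℂ (n × n) := ((nb : ℂ))⁻¹ • embM (Q * U) with hv
  set w : EuclideanSpace ℂ (n × n) := ((nc : ℂ))⁻¹ • embM (R * V) with hw
  have hnorm : ∀ (r : ℝ) (x : EuclideanSpace ℂ (n × n)), 0 < r → ‖x‖ = r →
      ‖((r : ℂ))⁻¹ • x‖ = 1 := by
    intro r x hr hx
    rw [norm_smul, norm_inv, Complex.norm_real, Real.norm_eq_abs, abs_of_pos hr, hx, inv_mul_cancel₀ hr.ne']
  have hun : ‖u‖ = 1 := hnorm na _ hna0 (norm_embM_psd hP)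
  have hvn : ‖v‖ = 1 := hnorm nb _ hnb0 (norm_embM_mul_unitary hQ hU)
  have hwn : ‖w‖ = 1 := hnorm nc _ hnc0 (norm_embM_mul_unitary hR hV)
  -- inner products
  have hinner_uv : (inner ℂ u v : ℂ) = ((tnAux (P * Q) / (na * nb) : ℝ) : ℂ) := by
    rw [hu, hv, inner_smul_left, inner_smul_right, inner_embM, hP.1.eq, ← Matrix.mul_assoc,
      hUtr, map_inv₀, Complex.conj_ofReal]
    push_cast
    field_simp
  have hinner_vw : (inner ℂ v w : ℂ) = ((tnAux (Q * R) / (nb * nc) : ℝ) : ℂ) := by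
    have e1 : (Q * U)ᴴ * (R * V) = (Uᴴ * (Q * R)) * V := by
      rw [Matrix.conjTranspose_mul, hQ.1.eq]
      noncomm_ring
    rw [hv, hw, inner_smul_left, inner_smul_right, inner_embM, e1, hVtr,
      tn_unitary_absorb hU, map_inv₀, Complex.conj_ofReal]
    push_cast
    field_simp
  have hinner_uw : (inner ℂ u w : ℂ) = ((na * nc : ℝ) : ℂ)⁻¹ * ((P * R) * V).trace := by
    rw [hu, hw, inner_smul_left, inner_smul_right, inner_embM, hP.1.eq, ← Matrix.mul_assoc,
      map_inv₀, Complex.conj_ofReal]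
    push_cast
    ring
  have hkey := key_inner u v w hun hvn hwn hinner_uv hinner_vw
  -- upper bound on re inner u w
  have habs := abs_trace_le_tnAux (P * R) hV
  have hre_uw : (inner ℂ u w : ℂ).re ≤ tnAux (P * R) / (na * nc) := by
    rw [hinner_uw]
    have h1 : (((na * nc : ℝ) : ℂ)⁻¹ * ((P * R) * V).trace).re =
        (na * nc)⁻¹ * (((P * R) * V).trace).re := by
      rw [← Complex.ofReal_inv, Complex.re_ofReal_mul]
    rw [h1, div_eq_inv_mul]
    apply mul_le_mul_of_nonneg_left _ (by positivity)
    calc (((P * R) * V).trace).re ≤ ‖((P * R) * V).trace‖ := Complex.re_le_norm _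
    _ ≤ tnAux (P * R) := habs
  exact le_trans hkey hre_uw

end TN
section RealLemmas

set_option maxHeartbeats 800000 in
lemma quad2 (A C E x z : ℝ) (hA : 0 ≤ A) (hC : 0 ≤ C) (hE : E ^ 2 ≤ A * C) :
    0 ≤ A * x ^ 2 + C * z ^ 2 + 2 * E * x * z := by
  rcases eq_or_lt_of_le hA with h0 | h0
  · have hE0 : E = 0 := by nlinarith [sq_nonneg E]
    rw [← h0, hE0]
    simp
    positivity
  · nlinarith [sq_nonneg (A * x + E * z), mul_nonneg (sub_nonneg.mpr hE) (sq_nonneg z)]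

set_option maxHeartbeats 1600000 in
lemma psd3 (a b c d e g x y z : ℝ) (ha : 0 ≤ a) (hb : 0 ≤ b) (hc : 0 ≤ c)
    (hd : d ^ 2 ≤ a * b) (hg : g ^ 2 ≤ b * c) (he : e ^ 2 ≤ a * c)
    (hdet : 0 ≤ a * b * c + 2 * d * e * g - a * g ^ 2 - b * e ^ 2 - c * d ^ 2) :
    0 ≤ a * x ^ 2 + b * y ^ 2 + c * z ^ 2 + 2 * d * x * y + 2 * e * x * z + 2 * g * y * z := by
  rcases eq_or_lt_of_le hb with h0 | h0
  · have hd0 : d = 0 := by nlinarith [sq_nonneg d]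
    have hg0 : g = 0 := by nlinarith [sq_nonneg g]
    have h2 := quad2 a c e x z ha hc he
    rw [hd0, hg0, ← h0]
    nlinarith [h2]
  · have hsub : (b * e - d * g) ^ 2 ≤ (a * b - d ^ 2) * (b * c - g ^ 2) := by
      nlinarith [mul_nonneg hb hdet]
    have hq := quad2 (a * b - d ^ 2) (b * c - g ^ 2) (b * e - d * g) x z
      (by nlinarith) (by nlinarith) hsub
    nlinarith [sq_nonneg (d * x + b * y + g * z), hq, h0]

open Real in
lemma real3 (p q r : ℝ) (hp0 : 0 ≤ p) (hp1 : p ≤ 1) (hq0 : 0 ≤ q) (hq1 : q ≤ 1)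
    (hr0 : 0 ≤ r) (hr1 : r ≤ 1)
    (H1 : p * q - Real.sqrt ((1 - p ^ 2) * (1 - q ^ 2)) ≤ r)
    (H2 : r * q - Real.sqrt ((1 - r ^ 2) * (1 - q ^ 2)) ≤ p)
    (H3 : p * r - Real.sqrt ((1 - p ^ 2) * (1 - r ^ 2)) ≤ q) :
    0 ≤ 1 + 2 * p * q * r - p ^ 2 - q ^ 2 - r ^ 2 := by
  set A := Real.arccos p with hA
  set B := Real.arccos q with hB
  set C := Real.arccos r with hC
  have hcA : Real.cos A = p := Real.cos_arccos (by linarith) hp1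
  have hcB : Real.cos B = q := Real.cos_arccos (by linarith) hq1
  have hcC : Real.cos C = r := Real.cos_arccos (by linarith) hr1
  have hsA : Real.sin A = Real.sqrt (1 - p ^ 2) := Real.sin_arccos p
  have hsB : Real.sin B = Real.sqrt (1 - q ^ 2) := Real.sin_arccos q
  have hsC : Real.sin C = Real.sqrt (1 - r ^ 2) := Real.sin_arccos r
  have hsA2 : Real.sin A ^ 2 = 1 - p ^ 2 := by
    rw [Real.sin_sq, hcA]
  have hsB2 : Real.sin B ^ 2 = 1 - q ^ 2 := by
    rw [Real.sin_sq, hcB]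
  have hA0 : 0 ≤ A := Real.arccos_nonneg p
  have hB0 : 0 ≤ B := Real.arccos_nonneg q
  have hC0 : 0 ≤ C := Real.arccos_nonneg r
  have hAhalf : A ≤ Real.pi / 2 := Real.arccos_le_pi_div_two.mpr hp0
  have hBhalf : B ≤ Real.pi / 2 := Real.arccos_le_pi_div_two.mpr hq0
  have hChalf : C ≤ Real.pi / 2 := Real.arccos_le_pi_div_two.mpr hr0
  have hCpi : C ≤ Real.pi := Real.arccos_le_pi r
  -- triangle inequalities
  have sqrtmul : ∀ s t : ℝ, 0 ≤ s → Real.sqrt (s * t) = Real.sqrt s * Real.sqrt t :=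
    fun s t hs => Real.sqrt_mul hs t
  have hpq2 : (0:ℝ) ≤ 1 - p ^ 2 := by nlinarith
  have hrq2 : (0:ℝ) ≤ 1 - r ^ 2 := by nlinarith
  have htri1 : C ≤ A + B := by
    by_contra hcon
    push_neg at hcon
    have hmem1 : A + B ∈ Set.Icc 0 Real.pi := ⟨by linarith, by linarith [Real.pi_pos]⟩
    have hmem2 : C ∈ Set.Icc 0 Real.pi := ⟨hC0, hCpi⟩
    have := Real.strictAntiOn_cos hmem1 hmem2 hcon
    rw [Real.cos_add, hcA, hcB, hsA, hsB, hcC] at this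
    rw [← sqrtmul _ _ hpq2] at this
    linarith
  have htri2 : A ≤ C + B := by
    by_contra hcon
    push_neg at hcon
    have hmem1 : C + B ∈ Set.Icc 0 Real.pi := ⟨by linarith, by linarith [Real.pi_pos]⟩
    have hmem2 : A ∈ Set.Icc 0 Real.pi := ⟨hA0, Real.arccos_le_pi p⟩
    have := Real.strictAntiOn_cos hmem1 hmem2 hcon
    rw [Real.cos_add, hcC, hcB, hsC, hsB, hcA] at this
    rw [← sqrtmul _ _ hrq2] at this
    linarith
  have htri3 : B ≤ A + C := by
    by_contra hcon
    push_neg at hcon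
    have hmem1 : A + C ∈ Set.Icc 0 Real.pi := ⟨by linarith, by linarith [Real.pi_pos]⟩
    have hmem2 : B ∈ Set.Icc 0 Real.pi := ⟨hB0, Real.arccos_le_pi q⟩
    have := Real.strictAntiOn_cos hmem1 hmem2 hcon
    rw [Real.cos_add, hcA, hcC, hsA, hsC, hcB] at this
    rw [← sqrtmul _ _ hpq2] at this
    linarith
  -- the two factors
  have hF2 : Real.cos (A + B) ≤ r := by
    rw [← hcC]
    exact Real.cos_le_cos_of_nonneg_of_le_pi hC0 (by linarith [Real.pi_pos]) htri1
  have hF1 : r ≤ Real.cos (A - B) := by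
    rw [← hcC, ← Real.cos_abs (A - B)]
    apply Real.cos_le_cos_of_nonneg_of_le_pi (abs_nonneg _) hCpi
    rw [abs_sub_le_iff]
    constructor <;> linarith
  have hkey : 1 + 2 * p * q * r - p ^ 2 - q ^ 2 - r ^ 2 =
      (Real.cos (A - B) - r) * (r - Real.cos (A + B)) := by
    rw [Real.cos_sub, Real.cos_add, hcA, hcB]
    linear_combination (-(1 - q ^ 2)) * hsA2 + (-(Real.sin A ^ 2)) * hsB2
  rw [hkey]
  exact mul_nonneg (by linarith) (by linarith)

end RealLemmas
section Assemble

variable {n : Type*} [Fintype n] [DecidableEq n]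

lemma tn_comm {P Q : Matrix n n ℂ} (hP : P.PosSemidef) (hQ : Q.PosSemidef) :
    tnAux (P * Q) = tnAux (Q * P) := by
  rw [tnAux_flip (P * Q), Matrix.conjTranspose_mul, hQ.1.eq, hP.1.eq]

lemma tnAux_zero_sq : tnAux (0 : Matrix n n ℂ) = 0 := by
  have h : (0 : Matrix n n ℂ) = (Matrix.posSemidef_conjTranspose_mul_self
      (0 : Matrix n n ℂ)).sqrt := by
    apply Matrix.PosSemidef.zero.eq_sqrt_of_sq_eq
    simp
  unfold tnAux
  rw [← h]
  simp

lemma reduce {m ni nj : ℕ} (Ri : Matrix (Fin m) (Fin ni) ℂ) (Rj : Matrix (Fin m) (Fin nj) ℂ) :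
    tnAux (Riᴴ * Rj) =
    tnAux ((Matrix.posSemidef_self_mul_conjTranspose Ri).sqrt *
           (Matrix.posSemidef_self_mul_conjTranspose Rj).sqrt) := by
  set Qi := (Matrix.posSemidef_self_mul_conjTranspose Ri).sqrt with hQidef
  set Qj := (Matrix.posSemidef_self_mul_conjTranspose Rj).sqrt with hQjdef
  have hQi : Qi.PosSemidef := Matrix.PosSemidef.posSemidef_sqrt _
  have hQj : Qj.PosSemidef := Matrix.PosSemidef.posSemidef_sqrt _
  have hQi2 : Qi * Qi = Ri * Riᴴ := Matrix.PosSemidef.sqrt_mul_self _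
  have hQj2 : Qj * Qj = Rj * Rjᴴ := Matrix.PosSemidef.sqrt_mul_self _
  have step1 : tnAux (Riᴴ * Rj) = tnAux (Qi * Rj) := by
    apply tnAux_congr
    calc (Riᴴ * Rj)ᴴ * (Riᴴ * Rj) = Rjᴴ * (Ri * Riᴴ) * Rj := by
          simp only [Matrix.conjTranspose_mul, Matrix.conjTranspose_conjTranspose]
          simp [Matrix.mul_assoc]
    _ = Rjᴴ * (Qi * Qi) * Rj := by rw [hQi2]
    _ = (Qi * Rj)ᴴ * (Qi * Rj) := by
          simp only [Matrix.conjTranspose_mul, hQi.1.eq]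
          simp [Matrix.mul_assoc]
  have step2 : tnAux (Qi * Rj) = tnAux (Rjᴴ * Qi) := by
    rw [tnAux_flip (Qi * Rj), Matrix.conjTranspose_mul, hQi.1.eq]
  have step3 : tnAux (Rjᴴ * Qi) = tnAux (Qj * Qi) := by
    apply tnAux_congr
    calc (Rjᴴ * Qi)ᴴ * (Rjᴴ * Qi) = Qi * (Rj * Rjᴴ) * Qi := by
          simp only [Matrix.conjTranspose_mul, Matrix.conjTranspose_conjTranspose, hQi.1.eq]
          simp [Matrix.mul_assoc]
    _ = Qi * (Qj * Qj) * Qi := by rw [hQj2]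
    _ = (Qj * Qi)ᴴ * (Qj * Qi) := by
          simp only [Matrix.conjTranspose_mul, hQi.1.eq, hQj.1.eq]
          simp [Matrix.mul_assoc]
  rw [step1, step2, step3, tn_comm hQj hQi]

end Assemble
section Core

lemma zeroQ {k : ℕ} {Q : Matrix (Fin k) (Fin k) ℂ} (hQ : Q.PosSemidef)
    (h : ((Q * Q).trace).re = 0) : Q = 0 := by
  apply embM_eq_zero
  rwa [hQ.1.eq]

set_option maxHeartbeats 1600000 in
lemma drury_core {k : ℕ} {Q₁ Q₂ Q₃ : Matrix (Fin k) (Fin k) ℂ}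
    (hQ₁ : Q₁.PosSemidef) (hQ₂ : Q₂.PosSemidef) (hQ₃ : Q₃.PosSemidef)
    (x y z : ℝ) :
    0 ≤ tnAux (Q₁ * Q₁) * x ^ 2 + tnAux (Q₂ * Q₂) * y ^ 2 + tnAux (Q₃ * Q₃) * z ^ 2 +
      2 * tnAux (Q₁ * Q₂) * x * y + 2 * tnAux (Q₁ * Q₃) * x * z +
      2 * tnAux (Q₂ * Q₃) * y * z := by
  have H1raw := tri hQ₁ hQ₂ hQ₃
  have H2raw := tri hQ₁ hQ₃ hQ₂
  have H3raw := tri hQ₂ hQ₁ hQ₃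
  have hcs12 := tn_cs hQ₁ hQ₂
  have hcs13 := tn_cs hQ₁ hQ₃
  have hcs23 := tn_cs hQ₂ hQ₃
  rw [tn_self_psd hQ₁, tn_self_psd hQ₂, tn_self_psd hQ₃]
  set a := ((Q₁ * Q₁).trace).re with hadef
  set b := ((Q₂ * Q₂).trace).re with hbdef
  set c := ((Q₃ * Q₃).trace).re with hcdef
  set d := tnAux (Q₁ * Q₂) with hddef
  set e := tnAux (Q₁ * Q₃) with hedef
  set g := tnAux (Q₂ * Q₃) with hgdef
  have ha : 0 ≤ a := by rw [hadef, ← tn_self_psd hQ₁]; exact tnAux_nonneg _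
  have hb : 0 ≤ b := by rw [hbdef, ← tn_self_psd hQ₂]; exact tnAux_nonneg _
  have hc : 0 ≤ c := by rw [hcdef, ← tn_self_psd hQ₃]; exact tnAux_nonneg _
  have hd0 : 0 ≤ d := tnAux_nonneg _
  have he0 : 0 ≤ e := tnAux_nonneg _
  have hg0 : 0 ≤ g := tnAux_nonneg _
  set sa := Real.sqrt a with hsadef
  set sb := Real.sqrt b with hsbdef
  set sc := Real.sqrt c with hscdef
  have hsa2 : sa ^ 2 = a := Real.sq_sqrt ha
  have hsb2 : sb ^ 2 = b := Real.sq_sqrt hb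
  have hsc2 : sc ^ 2 = c := Real.sq_sqrt hc
  have hsa0 : 0 ≤ sa := Real.sqrt_nonneg a
  have hsb0 : 0 ≤ sb := Real.sqrt_nonneg b
  have hsc0 : 0 ≤ sc := Real.sqrt_nonneg c
  -- 2x2 minors
  have hd2 : d ^ 2 ≤ a * b := by nlinarith [hcs12]
  have he2 : e ^ 2 ≤ a * c := by nlinarith [hcs13]
  have hg2 : g ^ 2 ≤ b * c := by nlinarith [hcs23]
  -- determinant
  have hdet : 0 ≤ a * b * c + 2 * d * e * g - a * g ^ 2 - b * e ^ 2 - c * d ^ 2 := by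
    rcases eq_or_lt_of_le ha with ha0 | ha0
    · have hq : Q₁ = 0 := zeroQ hQ₁ ha0.symm
      have hdz : d = 0 := by rw [hddef, hq, Matrix.zero_mul, tnAux_zero_sq]
      have hez : e = 0 := by rw [hedef, hq, Matrix.zero_mul, tnAux_zero_sq]
      rw [hdz, hez, ← ha0]
      nlinarith
    rcases eq_or_lt_of_le hb with hb0 | hb0
    · have hq : Q₂ = 0 := zeroQ hQ₂ hb0.symm
      have hdz : d = 0 := by rw [hddef, hq, Matrix.mul_zero, tnAux_zero_sq]
      have hgz : g = 0 := by rw [hgdef, hq, Matrix.zero_mul, tnAux_zero_sq]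
      rw [hdz, hgz, ← hb0]
      nlinarith
    rcases eq_or_lt_of_le hc with hc0 | hc0
    · have hq : Q₃ = 0 := zeroQ hQ₃ hc0.symm
      have hez : e = 0 := by rw [hedef, hq, Matrix.mul_zero, tnAux_zero_sq]
      have hgz : g = 0 := by rw [hgdef, hq, Matrix.mul_zero, tnAux_zero_sq]
      rw [hez, hgz, ← hc0]
      nlinarith
    -- main case
    have hsa0' : 0 < sa := Real.sqrt_pos.mpr ha0
    have hsb0' : 0 < sb := Real.sqrt_pos.mpr hb0
    have hsc0' : 0 < sc := Real.sqrt_pos.mpr hc0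
    have H1 := H1raw ha0 hb0 hc0
    have H2 := H2raw ha0 hc0 hb0
    have H3 := H3raw hb0 ha0 hc0
    rw [tn_comm hQ₃ hQ₂, mul_comm sc sb] at H2
    rw [tn_comm hQ₂ hQ₁, mul_comm sb sa] at H3
    set p := d / (sa * sb) with hpdef
    set q := g / (sb * sc) with hqdef
    set r := e / (sa * sc) with hrdef
    have hp0 : 0 ≤ p := div_nonneg hd0 (by positivity)
    have hq0' : 0 ≤ q := div_nonneg hg0 (by positivity)
    have hr0 : 0 ≤ r := div_nonneg he0 (by positivity)
    have hp1 : p ≤ 1 := by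
      rw [hpdef, div_le_one (by positivity)]
      exact hcs12
    have hq1 : q ≤ 1 := by
      rw [hqdef, div_le_one (by positivity)]
      exact hcs23
    have hr1 : r ≤ 1 := by
      rw [hrdef, div_le_one (by positivity)]
      exact hcs13
    have hreal := real3 p q r hp0 hp1 hq0' hq1 hr0 hr1 H1 H2 H3
    have key : a * b * c + 2 * d * e * g - a * g ^ 2 - b * e ^ 2 - c * d ^ 2 =
        (a * b * c) * (1 + 2 * p * q * r - p ^ 2 - q ^ 2 - r ^ 2) := by
      rw [hpdef, hqdef, hrdef, ← hsa2, ← hsb2, ← hsc2]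
      field_simp
      ring
    rw [key]
    exact mul_nonneg (by positivity) hreal
  exact psd3 a b c d e g x y z ha hb hc hd2 hg2 he2 hdet

end Core

set_option maxHeartbeats 1600000 in
/-- Drury's theorem: for rectangular matrices `R₁, R₂, R₃` with a common number of
rows (so that all products `Rⱼᴴ * Rₖ` are defined), the `3 × 3` matrix of trace
norms `‖Rⱼᴴ Rₖ‖_tr` is positive semi-definite. -/
theorem drury_traceNorm_gram_posSemidef {m n₁ n₂ n₃ : ℕ}
    (R₁ : Matrix (Fin m) (Fin n₁) ℂ) (R₂ : Matrix (Fin m) (Fin n₂) ℂ)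
    (R₃ : Matrix (Fin m) (Fin n₃) ℂ) :
    (Matrix.of
      ![![traceNorm (R₁ᴴ * R₁), traceNorm (R₁ᴴ * R₂), traceNorm (R₁ᴴ * R₃)],
        ![traceNorm (R₂ᴴ * R₁), traceNorm (R₂ᴴ * R₂), traceNorm (R₂ᴴ * R₃)],
        ![traceNorm (R₃ᴴ * R₁), traceNorm (R₃ᴴ * R₂), traceNorm (R₃ᴴ * R₃)]]).PosSemidef := by
  set Q₁ := (Matrix.posSemidef_self_mul_conjTranspose R₁).sqrt with hQ₁def
  set Q₂ := (Matrix.posSemidef_self_mul_conjTranspose R₂).sqrt with hQ₂def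
  set Q₃ := (Matrix.posSemidef_self_mul_conjTranspose R₃).sqrt with hQ₃def
  have hQ₁ : Q₁.PosSemidef := Matrix.PosSemidef.posSemidef_sqrt _
  have hQ₂ : Q₂.PosSemidef := Matrix.PosSemidef.posSemidef_sqrt _
  have hQ₃ : Q₃.PosSemidef := Matrix.PosSemidef.posSemidef_sqrt _
  have h11 : traceNorm (R₁ᴴ * R₁) = tnAux (Q₁ * Q₁) := reduce R₁ R₁
  have h12 : traceNorm (R₁ᴴ * R₂) = tnAux (Q₁ * Q₂) := reduce R₁ R₂
  have h13 : traceNorm (R₁ᴴ * R₃) = tnAux (Q₁ * Q₃) := reduce R₁ R₃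
  have h22 : traceNorm (R₂ᴴ * R₂) = tnAux (Q₂ * Q₂) := reduce R₂ R₂
  have h23 : traceNorm (R₂ᴴ * R₃) = tnAux (Q₂ * Q₃) := reduce R₂ R₃
  have h33 : traceNorm (R₃ᴴ * R₃) = tnAux (Q₃ * Q₃) := reduce R₃ R₃
  have h21 : traceNorm (R₂ᴴ * R₁) = tnAux (Q₁ * Q₂) :=
    (reduce R₂ R₁).trans (tn_comm hQ₂ hQ₁)
  have h31 : traceNorm (R₃ᴴ * R₁) = tnAux (Q₁ * Q₃) :=
    (reduce R₃ R₁).trans (tn_comm hQ₃ hQ₁)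
  have h32 : traceNorm (R₃ᴴ * R₂) = tnAux (Q₂ * Q₃) :=
    (reduce R₃ R₂).trans (tn_comm hQ₃ hQ₂)
  rw [Matrix.posSemidef_iff_dotProduct_mulVec]
  constructor
  · ext i j
    fin_cases i <;> fin_cases j <;>
      simp [Matrix.conjTranspose_apply, h11, h12, h13, h21, h22, h23, h31, h32, h33]
  · intro x
    have hgoal := drury_core hQ₁ hQ₂ hQ₃ (x 0) (x 1) (x 2)
    simp only [star_trivial, dotProduct, Matrix.mulVec, Fin.sum_univ_three,
      Matrix.of_apply, Matrix.cons_val', Matrix.cons_val_zero, Matrix.cons_val_one,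
      Matrix.head_cons, Matrix.empty_val', Matrix.cons_val_fin_one, Matrix.head_fin_const,
      Matrix.cons_val_two, Matrix.tail_cons]
    rw [h11, h12, h13, h21, h22, h23, h31, h32, h33]
    nlinarith [hgoal]
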